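/- For each integer j ≥ 1 and each ε with 0 < ε < 1/2 there is a constant K = K(j, ε) such that |ω_j(ξ) − 1| ≤ K ξ^{1/2 − ε} for all 0 < ξ ≤ 1. In particular ω_j(ξ) → 1 as ξ → 0+. -/

import Mathlib

open scoped BigOperators

noncomputable section

/-- `ω_j(ξ) = (1/2πi) ∫_{(c)} (Γ(s/2+1/4)/Γ(1/4))^j ξ^{-s} ds/s`, with `ω_j(0) = 1`;
the contour is taken at `c = 1` (the value is independent of `c > 0`). -/
def omegaFun (j : ℕ) (ξ : ℝ) : ℂ :=
  if ξ = 0 then 1 else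
    (1 / (2 * Real.pi)) * ∫ t : ℝ,
      (Complex.Gamma ((1 + t * Complex.I) / 2 + 1 / 4) / Complex.Gamma (1 / 4)) ^ j
        * (ξ : ℂ) ^ (-(1 + t * Complex.I)) / (1 + t * Complex.I)

open MeasureTheory Complex Set intervalIntegral

lemma norm_Gamma_le {z : ℂ} (hz : 0 < z.re) : ‖Complex.Gamma z‖ ≤ Real.Gamma z.re := by
  rw [Complex.Gamma_eq_integral hz, Complex.GammaIntegral, Real.Gamma_eq_integral hz]
  refine norm_integral_le_of_norm_le (Real.GammaIntegral_convergent hz) ?_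
  filter_upwards [ae_restrict_mem measurableSet_Ioi] with x hx
  rw [norm_mul,
    Complex.norm_cpow_eq_rpow_re_of_pos hx, Complex.norm_real, Real.norm_eq_abs,
    abs_of_pos (Real.exp_pos _)]
  simp [Real.exp_pos]

lemma norm_Gamma_le' {z : ℂ} (hz : 0 < z.re) (hzim : z.im ≠ 0) :
    ‖Complex.Gamma z‖ ≤ Real.Gamma (z.re + 1) / |z.im| := by
  have hz0 : z ≠ 0 := by intro h; rw [h] at hzim; simp at hzim
  have h1 : Complex.Gamma (z + 1) = z * Complex.Gamma z := Complex.Gamma_add_one z hz0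
  have h2 : ‖Complex.Gamma (z+1)‖ ≤ Real.Gamma (z.re + 1) := by
    have := norm_Gamma_le (z := z + 1) (by simp; linarith)
    simpa using this
  have h3 : |z.im| ≤ ‖z‖ := Complex.abs_im_le_norm z
  have h4 : ‖Complex.Gamma (z+1)‖ = ‖z‖ * ‖Complex.Gamma z‖ := by rw [h1, norm_mul]
  rw [le_div_iff₀ (by positivity)]
  calc ‖Complex.Gamma z‖ * |z.im| ≤ ‖Complex.Gamma z‖ * ‖z‖ := by
        exact mul_le_mul_of_nonneg_left h3 (norm_nonneg _)
    _ = ‖Complex.Gamma (z+1)‖ := by rw [h4]; ring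
    _ ≤ Real.Gamma (z.re + 1) := h2

def Gfun (s : ℂ) : ℂ := Complex.Gamma (s/2 + 1/4) / Complex.Gamma (1/4)

def Ffun (j : ℕ) (ξ : ℝ) (s : ℂ) : ℂ := (Gfun s)^j * (ξ:ℂ)^(-s)

lemma Gamma14_ne : Complex.Gamma (1/4) ≠ 0 := by
  apply Complex.Gamma_ne_zero
  intro m h
  have := congrArg Complex.re h
  simp at this
  have : (0:ℝ) ≤ m := Nat.cast_nonneg m
  linarith

lemma arg_eq {c t : ℝ} : ((c:ℂ) + t*Complex.I)/2 + 1/4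
    = ((c/2 + 1/4 : ℝ) : ℂ) + ((t/2 : ℝ)) * Complex.I := by push_cast; ring

lemma norm_Gfun_le {c t : ℝ} (hc : -(1/2) < c) :
    ‖Gfun ((c:ℂ) + t*Complex.I)‖ ≤ Real.Gamma (c/2+1/4) / ‖Complex.Gamma (1/4)‖ := by
  rw [Gfun, norm_div, arg_eq]
  apply div_le_div_of_nonneg_right ?_ (by positivity)
  have h := norm_Gamma_le (z := ((c/2 + 1/4 : ℝ) : ℂ) + ((t/2 : ℝ)) * Complex.I)
    (by simp; linarith)
  simpa using h

lemma norm_Gfun_le' {c t : ℝ} (hc : -(1/2) < c) (ht : t ≠ 0) :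
    ‖Gfun ((c:ℂ) + t*Complex.I)‖
      ≤ (2 * Real.Gamma (c/2+1/4+1) / ‖Complex.Gamma (1/4)‖) / |t| := by
  rw [Gfun, norm_div, arg_eq]
  have h := norm_Gamma_le' (z := ((c/2 + 1/4 : ℝ) : ℂ) + ((t/2 : ℝ)) * Complex.I)
    (by simp; linarith) (by simpa using ht)
  simp only [Complex.add_re, Complex.ofReal_re, Complex.mul_re, Complex.I_re, Complex.I_im,
    Complex.ofReal_im, Complex.add_im, Complex.mul_im] at h
  rw [div_div, mul_comm ‖Complex.Gamma (1/4)‖ |t|, ← div_div]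
  apply div_le_div_of_nonneg_right ?_ (by positivity)
  calc ‖Complex.Gamma (((c/2 + 1/4 : ℝ) : ℂ) + ((t/2 : ℝ)) * Complex.I)‖
      ≤ Real.Gamma (c/2+1/4+1) / |t/2| := by
        convert h using 3 <;> simp
    _ ≤ 2 * Real.Gamma (c/2+1/4+1) / |t| := by
        rw [abs_div]
        rw [div_le_div_iff₀ (by positivity) (by positivity)]
        have : (0:ℝ) < Real.Gamma (c/2+1/4+1) := Real.Gamma_pos_of_pos (by linarith)
        simp [abs_of_pos]
        nlinarith [abs_nonneg t, this]


lemma line_ne {c : ℝ} (hc0 : c ≠ 0) (t : ℝ) : (c:ℂ) + t*Complex.I ≠ 0 := by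
  intro h
  exact hc0 (by simpa using congrArg Complex.re h)

lemma arg_ne {c : ℝ} (hc : -(1/2) < c) (t : ℝ) (m : ℕ) :
    ((c:ℂ) + t*Complex.I)/2 + 1/4 ≠ -(m:ℂ) := by
  intro h
  have := congrArg Complex.re h
  rw [arg_eq] at this
  simp at this
  have hm : (0:ℝ) ≤ m := Nat.cast_nonneg m
  linarith

lemma contF (j : ℕ) {ξ c : ℝ} (hc : -(1/2) < c) (hc0 : c ≠ 0) (hξ : 0 < ξ) :
    Continuous (fun t : ℝ => Ffun j ξ ((c:ℂ) + t*Complex.I) / ((c:ℂ) + t*Complex.I)) := by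
  have hline : Continuous (fun t : ℝ => (c:ℂ) + t*Complex.I) := by fun_prop
  have hG : Continuous (fun t : ℝ => Gfun ((c:ℂ) + t*Complex.I)) := by
    apply Continuous.div_const
    rw [continuous_iff_continuousAt]
    intro t
    exact ContinuousAt.comp (x := t)
      (Complex.differentiableAt_Gamma _ (arg_ne hc t)).continuousAt (by fun_prop)
  have hpow : Continuous (fun t : ℝ => (ξ:ℂ) ^ (-((c:ℂ) + t*Complex.I))) :=
    hline.neg.const_cpow (Or.inl (by exact_mod_cast hξ.ne'))
  exact ((hG.pow j).mul hpow).div hline (line_ne hc0)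

lemma integrableF {j : ℕ} (hj : 1 ≤ j) {ξ c : ℝ} (hc : -(1/2) < c) (hc0 : c ≠ 0)
    (hξ : 0 < ξ) :
    Integrable (fun t : ℝ => Ffun j ξ ((c:ℂ) + t*Complex.I) / ((c:ℂ) + t*Complex.I)) := by
  set C1 := Real.Gamma (c/2+1/4) / ‖Complex.Gamma (1/4)‖ with hC1
  set C2 := 2*Real.Gamma (c/2+1/4+1) / ‖Complex.Gamma (1/4)‖ with hC2
  set P := ξ ^ (-c) with hP
  have hC1pos : 0 < C1 := by
    apply div_pos (Real.Gamma_pos_of_pos (by linarith)) (norm_pos_iff.mpr Gamma14_ne)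
  have hC2pos : 0 < C2 := by
    apply div_pos (mul_pos two_pos (Real.Gamma_pos_of_pos (by linarith)))
      (norm_pos_iff.mpr Gamma14_ne)
  have hPpos : 0 < P := Real.rpow_pos_of_pos hξ _
  set D := 2 * P * max (C1^j / |c|) (C1^(j-1) * C2) with hD
  apply ((integrable_inv_one_add_sq).const_mul D).mono'
    (contF j hc hc0 hξ).aestronglyMeasurable
  filter_upwards with t
  have hnorm : ‖Ffun j ξ ((c:ℂ) + t*Complex.I) / ((c:ℂ) + t*Complex.I)‖
      = ‖Gfun ((c:ℂ) + t*Complex.I)‖^j * P / ‖(c:ℂ) + t*Complex.I‖ := by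
    rw [Ffun, norm_div, norm_mul, norm_pow]
    congr 2
    rw [Complex.norm_cpow_eq_rpow_re_of_pos hξ]
    congr 1
    simp
  have habs1 : |c| ≤ ‖(c:ℂ) + t*Complex.I‖ := by
    have := Complex.abs_re_le_norm ((c:ℂ) + t*Complex.I)
    simpa using this
  have habs2 : |t| ≤ ‖(c:ℂ) + t*Complex.I‖ := by
    have := Complex.abs_im_le_norm ((c:ℂ) + t*Complex.I)
    simpa using this
  have hcpos : 0 < |c| := abs_pos.mpr hc0
  have hspos : 0 < ‖(c:ℂ) + t*Complex.I‖ := lt_of_lt_of_le hcpos habs1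
  have hG1 : ‖Gfun ((c:ℂ) + t*Complex.I)‖ ≤ C1 := norm_Gfun_le hc
  have hGnn : 0 ≤ ‖Gfun ((c:ℂ) + t*Complex.I)‖ := norm_nonneg _
  rw [hnorm]
  rcases le_or_gt (|t|) 1 with ht | ht
  · have h1 : ‖Gfun ((c:ℂ) + t*Complex.I)‖^j ≤ C1^j := pow_le_pow_left₀ hGnn hG1 j
    have h2 : ‖Gfun ((c:ℂ) + t*Complex.I)‖^j * P / ‖(c:ℂ) + t*Complex.I‖
        ≤ C1^j * P / |c| := by
      apply div_le_div₀ (by positivity) (by nlinarith) hcpos habs1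
    refine h2.trans ?_
    have ht2 : t^2 ≤ 1 := by nlinarith [abs_nonneg t, _root_.sq_abs t]
    have hmax : C1^j / |c| ≤ max (C1^j / |c|) (C1^(j-1) * C2) := le_max_left _ _
    have hinv : (1:ℝ)/2 ≤ (1+t^2)⁻¹ := by
      have h3 : (0:ℝ) < 1 + t^2 := by positivity
      have h4 : 1 + t^2 ≤ 2 := by linarith
      rw [one_div]
      exact inv_anti₀ h3 h4
    have hD0 : (0:ℝ) ≤ D := by positivity
    calc C1^j * P / |c| = P * (C1^j / |c|) := by ring
      _ ≤ P * max (C1^j / |c|) (C1^(j-1) * C2) :=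
          mul_le_mul_of_nonneg_left hmax hPpos.le
      _ = D * (1/2) := by rw [hD]; ring
      _ ≤ D * (1+t^2)⁻¹ := mul_le_mul_of_nonneg_left hinv hD0
  · have htpos : (0:ℝ) < |t| := by linarith
    have ht0 : t ≠ 0 := by intro h; rw [h] at htpos; simp at htpos
    have hG2 : ‖Gfun ((c:ℂ) + t*Complex.I)‖ ≤ C2 / |t| := norm_Gfun_le' hc ht0
    have h1 : ‖Gfun ((c:ℂ) + t*Complex.I)‖^j ≤ C1^(j-1) * (C2/|t|) := by
      have : j = (j-1) + 1 := (Nat.succ_pred_eq_of_pos hj).symm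
      rw [this, pow_succ]
      exact mul_le_mul (pow_le_pow_left₀ hGnn hG1 _) hG2 hGnn (by positivity)
    have h2 : ‖Gfun ((c:ℂ) + t*Complex.I)‖^j * P / ‖(c:ℂ) + t*Complex.I‖
        ≤ (C1^(j-1) * (C2/|t|)) * P / |t| := by
      apply div_le_div₀ (by positivity) (by nlinarith) htpos habs2
    refine h2.trans ?_
    have hmax : C1^(j-1) * C2 ≤ max (C1^j / |c|) (C1^(j-1) * C2) := le_max_right _ _
    have hsq : |t| * |t| = t ^ 2 := by
      rw [← abs_mul, abs_mul_self t]; exact (sq t).symm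
    have key : (C1^(j-1) * (C2/|t|)) * P / |t| = P * (C1^(j-1) * C2) / t^2 := by
      rw [← hsq]; field_simp
    rw [key]
    have h3 : (0:ℝ) < 1 + t^2 := by positivity
    have ht2 : 1 ≤ t^2 := by nlinarith
    have htsq : (0:ℝ) < t^2 := by positivity
    rw [div_le_iff₀ htsq]
    have hD0 : (0:ℝ) ≤ D := by positivity
    have hhalf : (1:ℝ)/2 ≤ (1+t^2)⁻¹ * t^2 := by
      rw [inv_mul_eq_div, le_div_iff₀ h3]; linarith
    calc P * (C1^(j-1) * C2) ≤ P * max (C1^j / |c|) (C1^(j-1) * C2) :=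
          mul_le_mul_of_nonneg_left hmax hPpos.le
      _ = D * (1/2) := by rw [hD]; ring
      _ ≤ D * ((1+t^2)⁻¹ * t^2) := mul_le_mul_of_nonneg_left hhalf hD0
      _ = D * (1+t^2)⁻¹ * t^2 := by ring

lemma inv_decomp {c : ℝ} (hc : c ≠ 0) (t : ℝ) :
    ((c:ℂ) + t*Complex.I)⁻¹
      = ((c/(c^2+t^2) : ℝ) : ℂ) + ((-(t/(c^2+t^2)) : ℝ) : ℂ) * Complex.I := by
  have h2 : c^2 + t^2 ≠ 0 := by positivity
  rw [eq_comm]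
  apply eq_inv_of_mul_eq_one_left
  push_cast
  have h2' : ((c:ℂ)^2 + (t:ℂ)^2) ≠ 0 := by exact_mod_cast Complex.ofReal_ne_zero.mpr h2
  field_simp
  ring_nf
  rw [Complex.I_sq]
  ring

lemma int_re_part {c : ℝ} (hc : c ≠ 0) (T : ℝ) :
    ∫ t in (-T)..T, c/(c^2+t^2) = 2 * Real.arctan (T/c) := by
  have hderiv : ∀ x ∈ Set.uIcc (-T) T, HasDerivAt (fun t => Real.arctan (t/c))
      (c/(c^2+x^2)) x := by
    intro x _
    have h := (Real.hasDerivAt_arctan (x/c)).comp x ((hasDerivAt_id x).div_const c)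
    refine h.congr_deriv ?_
    have h2 : c^2 + x^2 ≠ 0 := by positivity
    field_simp
  rw [intervalIntegral.integral_eq_sub_of_hasDerivAt hderiv]
  · rw [neg_div, Real.arctan_neg]; ring
  · apply Continuous.intervalIntegrable
    have : ∀ x : ℝ, c^2 + x^2 ≠ 0 := fun x => by positivity
    exact continuous_const.div (by continuity) this

lemma int_im_part {c : ℝ} (hc : c ≠ 0) (T : ℝ) :
    ∫ t in (-T)..T, t/(c^2+t^2) = 0 := by
  have hderiv : ∀ x ∈ Set.uIcc (-T) T, HasDerivAt (fun t => (1/2) * Real.log (c^2+t^2))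
      (x/(c^2+x^2)) x := by
    intro x _
    have h2 : c^2 + x^2 ≠ 0 := by positivity
    have h := (Real.hasDerivAt_log h2).comp x
      (((hasDerivAt_id x).pow 2).const_add (c^2))
    have h' := h.const_mul (1/2 : ℝ)
    refine h'.congr_deriv ?_
    simp only [id]
    field_simp
    norm_num
  rw [intervalIntegral.integral_eq_sub_of_hasDerivAt hderiv]
  · simp [neg_pow]
  · apply Continuous.intervalIntegrable
    have : ∀ x : ℝ, c^2 + x^2 ≠ 0 := fun x => by positivity
    exact (continuous_id).div (by continuity) this

lemma inv_line_integral {c : ℝ} (hc : c ≠ 0) (T : ℝ) :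
    ∫ t in (-T)..T, ((c:ℂ) + t*Complex.I)⁻¹ = ((2 * Real.arctan (T/c) : ℝ) : ℂ) := by
  have hcont1 : Continuous (fun t : ℝ => c/(c^2+t^2)) := by
    have : ∀ x : ℝ, c^2 + x^2 ≠ 0 := fun x => by positivity
    exact continuous_const.div (by continuity) this
  have hcont2 : Continuous (fun t : ℝ => -(t/(c^2+t^2))) := by
    have : ∀ x : ℝ, c^2 + x^2 ≠ 0 := fun x => by positivity
    exact (continuous_id.div (by continuity) this).neg
  calc ∫ t in (-T)..T, ((c:ℂ) + t*Complex.I)⁻¹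
      = ∫ t in (-T)..T, (((c/(c^2+t^2) : ℝ) : ℂ) + ((-(t/(c^2+t^2)) : ℝ) : ℂ) * Complex.I) := by
        apply intervalIntegral.integral_congr
        intro t _
        exact inv_decomp hc t
    _ = (∫ t in (-T)..T, ((c/(c^2+t^2) : ℝ) : ℂ))
        + (∫ t in (-T)..T, ((-(t/(c^2+t^2)) : ℝ) : ℂ)) * Complex.I := by
        rw [intervalIntegral.integral_add, intervalIntegral.integral_mul_const]
        · exact (Complex.continuous_ofReal.comp hcont1).intervalIntegrable _ _
        · exact ((Complex.continuous_ofReal.comp hcont2).mul continuous_const).intervalIntegrable _ _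
    _ = ((2 * Real.arctan (T/c) : ℝ) : ℂ) := by
        rw [intervalIntegral.integral_ofReal, intervalIntegral.integral_ofReal,
          int_re_part hc T]
        have : ∫ t in (-T)..T, -(t/(c^2+t^2)) = 0 := by
          rw [intervalIntegral.integral_neg, int_im_part hc T, neg_zero]
        rw [this]
        simp

lemma re_half {s : ℂ} : (s/2 + 1/4).re = s.re/2 + 1/4 := by
  have h : s/2 + 1/4 = s/((2:ℝ):ℂ) + (((1:ℝ)/4 : ℝ) : ℂ) := by push_cast; ring
  rw [h, Complex.add_re, Complex.div_ofReal_re, Complex.ofReal_re]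

lemma arg_ne2 {s : ℂ} (hs : -(1/2) < s.re) (m : ℕ) : s/2 + 1/4 ≠ -(m:ℂ) := by
  intro h
  have := congrArg Complex.re h
  rw [re_half] at this
  simp at this
  have hm : (0:ℝ) ≤ m := Nat.cast_nonneg m
  linarith

lemma diffF (j : ℕ) {ξ : ℝ} (hξ : 0 < ξ) :
    DifferentiableOn ℂ (Ffun j ξ) {s : ℂ | -(1/2) < s.re} := by
  intro s hs
  apply DifferentiableAt.differentiableWithinAt
  have hG : DifferentiableAt ℂ Gfun s := by
    apply DifferentiableAt.div_const
    exact (Complex.differentiableAt_Gamma _ (arg_ne2 hs)).comp s (by fun_prop)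
  have hpow : DifferentiableAt ℂ (fun s : ℂ => (ξ:ℂ)^(-s)) s :=
    (differentiable_neg _).const_cpow (Or.inl (by exact_mod_cast hξ.ne'))
  exact (hG.pow j).mul hpow

lemma F_zero (j : ℕ) {ξ : ℝ} (hξ : 0 < ξ) : Ffun j ξ 0 = 1 := by
  rw [Ffun, Gfun]
  have h1 : (0:ℂ)/2 + 1/4 = 1/4 := by norm_num
  rw [h1, div_self Gamma14_ne, one_pow, neg_zero, Complex.cpow_zero, one_mul]

lemma strip_bound (j : ℕ) {ξ a : ℝ} (hξ : 0 < ξ) (ha : 0 < a) (ha' : a < 1/2) :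
    ∃ M : ℝ, 0 ≤ M ∧ ∀ x t : ℝ, -a ≤ x → x ≤ 1 →
      ‖Ffun j ξ ((x:ℂ) + t*Complex.I)‖ ≤ M := by
  have hcomp : IsCompact (Icc (-a) (1:ℝ)) := isCompact_Icc
  have hne : (Icc (-a) (1:ℝ)).Nonempty := ⟨1, by constructor <;> linarith⟩
  have hcont : ContinuousOn (fun x : ℝ => Real.Gamma (x/2+1/4)) (Icc (-a) 1) := by
    intro x hx
    apply ContinuousAt.continuousWithinAt
    have hpos : ∀ m : ℕ, x/2 + 1/4 ≠ -m := by
      intro m h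
      have hm : (0:ℝ) ≤ m := Nat.cast_nonneg m
      have := hx.1
      have : -(1/2) < x := by linarith
      linarith [h ▸ (by linarith : 0 < x/2 + 1/4), neg_nonpos_of_nonneg hm]
    exact ContinuousAt.comp (g := Real.Gamma) (f := fun y : ℝ => y/2 + 1/4) (x := x)
      (Real.differentiableAt_Gamma hpos).continuousAt (by fun_prop)
  obtain ⟨x0, hx0, hx0max⟩ := hcomp.exists_isMaxOn hne hcont
  set Gmax := Real.Gamma (x0/2+1/4) / ‖Complex.Gamma (1/4)‖ with hGmax
  have hGmaxpos : 0 < Gmax := by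
    apply div_pos (Real.Gamma_pos_of_pos (by cases hx0; linarith))
      (norm_pos_iff.mpr Gamma14_ne)
  set Pmax := ξ^(-(1:ℝ)) + ξ^a with hPmax
  have hPmaxpos : 0 < Pmax := by
    have := Real.rpow_pos_of_pos hξ (-(1:ℝ))
    have := Real.rpow_pos_of_pos hξ a
    linarith
  refine ⟨Gmax^j * Pmax, by positivity, ?_⟩
  intro x t hx1 hx2
  have hxc : -(1/2) < x := by linarith
  have hG : ‖Gfun ((x:ℂ) + t*Complex.I)‖ ≤ Gmax := by
    refine (norm_Gfun_le hxc).trans ?_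
    apply div_le_div_of_nonneg_right (hx0max ⟨hx1, hx2⟩) (norm_pos_iff.mpr Gamma14_ne).le
  have hpowle : ‖(ξ:ℂ)^(-((x:ℂ) + t*Complex.I))‖ ≤ Pmax := by
    have hre : (-((x:ℂ) + t*Complex.I)).re = -x := by simp
    rw [Complex.norm_cpow_eq_rpow_re_of_pos hξ, hre]
    rcases le_or_gt ξ 1 with h1 | h1
    · have : ξ^(-x) ≤ ξ^(-(1:ℝ)) := Real.rpow_le_rpow_of_exponent_ge hξ h1 (by linarith)
      have := Real.rpow_pos_of_pos hξ a
      rw [hPmax]; linarith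
    · have : ξ^(-x) ≤ ξ^a := Real.rpow_le_rpow_of_exponent_le h1.le (by linarith)
      have := Real.rpow_pos_of_pos hξ (-(1:ℝ))
      rw [hPmax]; linarith
  rw [Ffun, norm_mul, norm_pow]
  apply mul_le_mul (pow_le_pow_left₀ (norm_nonneg _) hG j) hpowle (norm_nonneg _)
    (by positivity)

lemma shift (j : ℕ) (hj : 1 ≤ j) {ξ a : ℝ} (hξ : 0 < ξ) (ha : 0 < a) (ha' : a < 1/2) :
    (∫ t : ℝ, Ffun j ξ (((1:ℝ):ℂ) + t*Complex.I) / (((1:ℝ):ℂ) + t*Complex.I))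
      = (∫ t : ℝ, Ffun j ξ (((-a:ℝ):ℂ) + t*Complex.I) / (((-a:ℝ):ℂ) + t*Complex.I))
        + 2*Real.pi := by
  set F := Ffun j ξ with hF
  set U : Set ℂ := {s : ℂ | -(1/2) < s.re} with hU
  have hUopen : IsOpen U := isOpen_lt continuous_const Complex.continuous_re
  have h0U : (0:ℂ) ∈ U := by simp [hU]
  have hFdiff : DifferentiableOn ℂ F U := diffF j hξ
  have hΦ : DifferentiableOn ℂ (dslope F 0) U :=
    (differentiableOn_dslope (hUopen.mem_nhds h0U)).mpr hFdiff
  obtain ⟨M, hM0, hM⟩ := strip_bound j hξ ha ha'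
  have hmemU : ∀ (x y : ℝ), -a ≤ x → (x:ℂ) + y*Complex.I ∈ U := by
    intro x y hx
    simp only [hU, mem_setOf_eq]
    have : ((x:ℂ) + y*Complex.I).re = x := by simp
    rw [this]; linarith
  have hΦcont : ∀ (c : ℝ), -a ≤ c → Continuous (fun t : ℝ => dslope F 0 ((c:ℂ) + t*Complex.I)) := by
    intro c hc
    rw [continuous_iff_continuousAt]
    intro t
    have := (hΦ.differentiableAt (hUopen.mem_nhds (hmemU c t hc))).continuousAt
    exact ContinuousAt.comp (x := t) this (by fun_prop)
  -- decomposition on vertical lines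
  have hsplit : ∀ (c : ℝ), c ≠ 0 → ∀ t : ℝ,
      F ((c:ℂ) + t*Complex.I) / ((c:ℂ) + t*Complex.I)
        = dslope F 0 ((c:ℂ) + t*Complex.I) + ((c:ℂ) + t*Complex.I)⁻¹ := by
    intro c hc t
    have hne : (c:ℂ) + t*Complex.I ≠ 0 := line_ne hc t
    rw [dslope_of_ne F hne, slope_def_field, hF, F_zero j hξ]
    field_simp
    ring
  -- truncated versions
  have htrunc : ∀ (c : ℝ), c ≠ 0 → -a ≤ c → ∀ T : ℝ,
      (∫ t in (-T)..T, F ((c:ℂ) + t*Complex.I) / ((c:ℂ) + t*Complex.I))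
        = (∫ t in (-T)..T, dslope F 0 ((c:ℂ) + t*Complex.I))
          + ((2 * Real.arctan (T/c) : ℝ) : ℂ) := by
    intro c hc hc' T
    rw [← inv_line_integral hc T]
    rw [← intervalIntegral.integral_add ((hΦcont c hc').intervalIntegrable _ _)]
    · apply intervalIntegral.integral_congr
      intro t _
      exact hsplit c hc t
    · apply Continuous.intervalIntegrable
      have : ∀ t : ℝ, (c:ℂ) + t*Complex.I ≠ 0 := line_ne hc
      exact (continuous_const.add (Complex.continuous_ofReal.mul continuous_const)).inv₀ this
  -- rectangle estimate
  have hhor : ∀ (y : ℝ), y ≠ 0 →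
      ‖∫ x in (-a)..(1:ℝ), dslope F 0 ((x:ℂ) + y*Complex.I)‖ ≤ (M+1)/|y| * (1+a) := by
    intro y hy
    have hbd : ∀ x ∈ Set.Ioc (min (-a) (1:ℝ)) (max (-a) 1),
        ‖dslope F 0 ((x:ℂ) + y*Complex.I)‖ ≤ (M+1)/|y| := by
      intro x hx
      rw [min_eq_left (by linarith), max_eq_right (by linarith)] at hx
      have hne : (x:ℂ) + y*Complex.I ≠ 0 := by
        intro h
        exact hy (by simpa using congrArg Complex.im h)
      rw [dslope_of_ne F hne, slope_def_field, hF, F_zero j hξ]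
      rw [sub_zero, div_eq_mul_inv, norm_mul, norm_inv]
      have him : |y| ≤ ‖(x:ℂ) + y*Complex.I‖ := by
        have := Complex.abs_im_le_norm ((x:ℂ) + y*Complex.I)
        simpa using this
      have hnum : ‖Ffun j ξ ((x:ℂ) + y*Complex.I) - 1‖ ≤ M + 1 := by
        refine (norm_sub_le _ _).trans ?_
        have := hM x y hx.1.le hx.2
        simp only [norm_one]
        linarith
      have hy0 : (0:ℝ) < |y| := abs_pos.mpr hy
      rw [div_eq_mul_inv]
      apply mul_le_mul hnum ?_ (by positivity) (by linarith)
      exact inv_anti₀ hy0 him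
    have := intervalIntegral.norm_integral_le_of_norm_le_const hbd
    refine this.trans ?_
    have : |(1:ℝ) - (-a)| = 1 + a := by rw [abs_of_pos (by linarith)]; ring
    rw [this]
  have hrect : ∀ T : ℝ, 0 < T →
      ‖(∫ t in (-T)..T, dslope F 0 (((1:ℝ):ℂ) + t*Complex.I))
        - (∫ t in (-T)..T, dslope F 0 (((-a:ℝ):ℂ) + t*Complex.I))‖
        ≤ 2 * ((M+1)/T * (1+a)) := by
    intro T hT
    set z : ℂ := ((-a:ℝ):ℂ) + ((-T:ℝ):ℂ)*Complex.I with hz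
    set w : ℂ := ((1:ℝ):ℂ) + ((T:ℝ):ℂ)*Complex.I with hw
    have hzre : z.re = -a := by simp [hz]
    have hwre : w.re = 1 := by simp [hw]
    have hzim : z.im = -T := by simp [hz]
    have hwim : w.im = T := by simp [hw]
    have hsub : Set.uIcc z.re w.re ×ℂ Set.uIcc z.im w.im ⊆ U := by
      intro s hs
      rw [Complex.mem_reProdIm] at hs
      have h1 := hs.1
      rw [hzre, hwre, Set.uIcc_of_le (by linarith : -a ≤ (1:ℝ))] at h1
      simp only [hU, mem_setOf_eq]
      linarith [h1.1]
    have hcr := Complex.integral_boundary_rect_eq_zero_of_differentiableOn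
      (dslope F 0) z w (hΦ.mono hsub)
    rw [hzre, hwre, hzim, hwim] at hcr
    simp only [smul_eq_mul] at hcr
    have key : Complex.I * ((∫ t in (-T)..T, dslope F 0 (((1:ℝ):ℂ) + t*Complex.I))
        - (∫ t in (-T)..T, dslope F 0 (((-a:ℝ):ℂ) + t*Complex.I)))
        = (∫ x in (-a)..(1:ℝ), dslope F 0 ((x:ℂ) + (T:ℝ)*Complex.I))
          - (∫ x in (-a)..(1:ℝ), dslope F 0 ((x:ℂ) + (-T:ℝ)*Complex.I)) := by
      push_cast at hcr ⊢
      linear_combination hcr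
    have hnorm : ‖(∫ t in (-T)..T, dslope F 0 (((1:ℝ):ℂ) + t*Complex.I))
        - (∫ t in (-T)..T, dslope F 0 (((-a:ℝ):ℂ) + t*Complex.I))‖
        = ‖(∫ x in (-a)..(1:ℝ), dslope F 0 ((x:ℂ) + (T:ℝ)*Complex.I))
          - (∫ x in (-a)..(1:ℝ), dslope F 0 ((x:ℂ) + (-T:ℝ)*Complex.I))‖ := by
      rw [← key, norm_mul, Complex.norm_I, one_mul]
    rw [hnorm]
    have h1 := hhor T hT.ne'
    have h2 := hhor (-T) (by intro h; rw [neg_eq_zero] at h; exact hT.ne' h)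
    rw [abs_of_pos hT] at h1
    rw [abs_neg, abs_of_pos hT] at h2
    calc ‖_ - _‖ ≤ _ := norm_sub_le _ _
      _ ≤ 2 * ((M+1)/T * (1+a)) := by linarith
  -- limits
  have hint1 : Integrable (fun t : ℝ => F (((1:ℝ):ℂ) + t*Complex.I) / (((1:ℝ):ℂ) + t*Complex.I)) :=
    integrableF hj (by norm_num) (by norm_num) hξ
  have hint2 : Integrable (fun t : ℝ => F (((-a:ℝ):ℂ) + t*Complex.I) / (((-a:ℝ):ℂ) + t*Complex.I)) :=
    integrableF hj (by linarith) (by linarith) hξ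
  have hlim1 : Filter.Tendsto (fun T : ℝ => ∫ t in (-T)..T, F (((1:ℝ):ℂ) + t*Complex.I) / (((1:ℝ):ℂ) + t*Complex.I))
      Filter.atTop (nhds (∫ t : ℝ, F (((1:ℝ):ℂ) + t*Complex.I) / (((1:ℝ):ℂ) + t*Complex.I))) :=
    intervalIntegral_tendsto_integral hint1 (Filter.tendsto_neg_atBot_iff.mpr Filter.tendsto_id) Filter.tendsto_id
  have hlim2 : Filter.Tendsto (fun T : ℝ => ∫ t in (-T)..T, F (((-a:ℝ):ℂ) + t*Complex.I) / (((-a:ℝ):ℂ) + t*Complex.I))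
      Filter.atTop (nhds (∫ t : ℝ, F (((-a:ℝ):ℂ) + t*Complex.I) / (((-a:ℝ):ℂ) + t*Complex.I))) :=
    intervalIntegral_tendsto_integral hint2 (Filter.tendsto_neg_atBot_iff.mpr Filter.tendsto_id) Filter.tendsto_id
  have hdiff_lim : Filter.Tendsto (fun T : ℝ =>
      (∫ t in (-T)..T, F (((1:ℝ):ℂ) + t*Complex.I) / (((1:ℝ):ℂ) + t*Complex.I))
      - (∫ t in (-T)..T, F (((-a:ℝ):ℂ) + t*Complex.I) / (((-a:ℝ):ℂ) + t*Complex.I)))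
      Filter.atTop (nhds ((∫ t : ℝ, F (((1:ℝ):ℂ) + t*Complex.I) / (((1:ℝ):ℂ) + t*Complex.I))
        - (∫ t : ℝ, F (((-a:ℝ):ℂ) + t*Complex.I) / (((-a:ℝ):ℂ) + t*Complex.I)))) :=
    hlim1.sub hlim2
  -- the same function expressed via dslope + arctan
  have hzeroΦ : Filter.Tendsto (fun T : ℝ =>
      (∫ t in (-T)..T, dslope F 0 (((1:ℝ):ℂ) + t*Complex.I))
        - (∫ t in (-T)..T, dslope F 0 (((-a:ℝ):ℂ) + t*Complex.I)))
      Filter.atTop (nhds 0) := by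
    have hg : Filter.Tendsto (fun T : ℝ => 2*((M+1)/T*(1+a))) Filter.atTop (nhds 0) := by
      have h1 : Filter.Tendsto (fun T : ℝ => (2*(M+1)*(1+a))/T) Filter.atTop (nhds 0) :=
        Filter.Tendsto.div_atTop tendsto_const_nhds Filter.tendsto_id
      apply h1.congr
      intro T
      ring
    apply squeeze_zero_norm' ?_ hg
    filter_upwards [Filter.eventually_gt_atTop (0:ℝ)] with T hT
    exact hrect T hT
  have harc1 : Filter.Tendsto (fun T : ℝ => ((2 * Real.arctan (T/(1:ℝ)) : ℝ) : ℂ))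
      Filter.atTop (nhds ((Real.pi : ℝ) : ℂ)) := by
    apply Filter.Tendsto.comp (Complex.continuous_ofReal.tendsto _)
    have h0 : Filter.Tendsto (fun T : ℝ => Real.arctan (T/1)) Filter.atTop (nhds (Real.pi/2)) := by
      apply Filter.Tendsto.comp (Real.tendsto_arctan_atTop.mono_right nhdsWithin_le_nhds)
      simp only [div_one]; exact Filter.tendsto_id
    have h2 := h0.const_mul (2:ℝ)
    rw [show (2:ℝ)*(Real.pi/2) = Real.pi by ring] at h2
    exact h2
  have harc2 : Filter.Tendsto (fun T : ℝ => ((2 * Real.arctan (T/(-a)) : ℝ) : ℂ))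
      Filter.atTop (nhds ((-Real.pi : ℝ) : ℂ)) := by
    apply Filter.Tendsto.comp (Complex.continuous_ofReal.tendsto _)
    have hbot : Filter.Tendsto (fun T : ℝ => T/(-a)) Filter.atTop Filter.atBot := by
      have := Filter.tendsto_id (α := ℝ).atTop_mul_const_of_neg (show (-a)⁻¹ < 0 by
        simp; positivity)
      apply this.congr
      intro T
      simp [div_eq_mul_inv]
    have h0 : Filter.Tendsto (fun T : ℝ => Real.arctan (T/(-a))) Filter.atTop
        (nhds (-(Real.pi/2))) := by
      have h := Filter.Tendsto.comp (g := Real.arctan)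
        (Real.tendsto_arctan_atBot.mono_right nhdsWithin_le_nhds) hbot
      exact h
    have h2 := h0.const_mul (2:ℝ)
    rw [show (2:ℝ)*(-(Real.pi/2)) = -Real.pi by ring] at h2
    exact h2
  have hcombo : Filter.Tendsto (fun T : ℝ =>
      (∫ t in (-T)..T, F (((1:ℝ):ℂ) + t*Complex.I) / (((1:ℝ):ℂ) + t*Complex.I))
      - (∫ t in (-T)..T, F (((-a:ℝ):ℂ) + t*Complex.I) / (((-a:ℝ):ℂ) + t*Complex.I)))
      Filter.atTop (nhds (0 + (((Real.pi : ℝ) : ℂ) - ((-Real.pi : ℝ) : ℂ)))) := by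
    have h := hzeroΦ.add (harc1.sub harc2)
    apply h.congr
    intro T
    rw [htrunc 1 (by norm_num) (by linarith) T, htrunc (-a) (by intro h; linarith) (by linarith) T]
    ring
  have h5 := tendsto_nhds_unique hdiff_lim hcombo
  push_cast at h5 ⊢
  linear_combination h5

-- original definition below

lemma omega_eq (j : ℕ) {ξ : ℝ} (hξ : 0 < ξ) :
    omegaFun j ξ = (1/(2*(Real.pi:ℂ)))
      * ∫ t : ℝ, Ffun j ξ (((1:ℝ):ℂ) + t*Complex.I) / (((1:ℝ):ℂ) + t*Complex.I) := by
  rw [omegaFun, if_neg hξ.ne']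
  norm_num [Ffun, Gfun]

/-- For small `ξ > 0` one has `ω_j(ξ) = 1 + O_{j,ε}(ξ^{1/2-ε})`; in particular
`ω_j(ξ) → 1` as `ξ → 0⁺`. -/
theorem stmt3 (j : ℕ) (hj : 1 ≤ j) (ε : ℝ) (hε : 0 < ε) (hε' : ε < 1 / 2) :
    (∃ K : ℝ, ∀ ξ : ℝ, 0 < ξ → ξ ≤ 1 →
      ‖omegaFun j ξ - 1‖ ≤ K * ξ ^ ((1 : ℝ) / 2 - ε)) ∧
    Filter.Tendsto (fun ξ : ℝ => omegaFun j ξ) (nhdsWithin 0 (Set.Ioi 0)) (nhds 1) := by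
  set a : ℝ := 1/2 - ε with haa
  have ha : 0 < a := by rw [haa]; linarith
  have ha' : a < 1/2 := by rw [haa]; linarith
  set C : ℝ := ∫ t : ℝ, ‖Gfun (((-a:ℝ):ℂ) + t*Complex.I)‖^j / ‖((-a:ℝ):ℂ) + t*Complex.I‖
    with hC
  have hCnn : 0 ≤ C := integral_nonneg (fun t => by positivity)
  set K : ℝ := C / (2*Real.pi) with hK
  have hπ : (0:ℝ) < 2*Real.pi := by positivity
  have hbound : ∀ ξ : ℝ, 0 < ξ → ξ ≤ 1 → ‖omegaFun j ξ - 1‖ ≤ K * ξ ^ a := by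
    intro ξ hξ0 hξ1
    rw [omega_eq j hξ0, shift j hj hξ0 ha ha']
    have hπc : ((Real.pi:ℝ):ℂ) ≠ 0 := Complex.ofReal_ne_zero.mpr Real.pi_ne_zero
    have heq : (1/(2*(Real.pi:ℂ)))
        * ((∫ t : ℝ, Ffun j ξ (((-a:ℝ):ℂ) + t*Complex.I) / (((-a:ℝ):ℂ) + t*Complex.I))
          + 2*Real.pi) - 1
        = (1/(2*(Real.pi:ℂ)))
          * (∫ t : ℝ, Ffun j ξ (((-a:ℝ):ℂ) + t*Complex.I) / (((-a:ℝ):ℂ) + t*Complex.I)) := by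
      rw [mul_add, one_div, inv_mul_cancel₀ (by simp [hπc] : (2*(Real.pi:ℂ)) ≠ 0), add_sub_cancel_right]
    rw [heq, norm_mul]
    have hnormc : ‖(1/(2*(Real.pi:ℂ)))‖ = 1/(2*Real.pi) := by
      rw [show (1/(2*(Real.pi:ℂ))) = (((1/(2*Real.pi):ℝ)):ℂ) by push_cast; ring]
      rw [Complex.norm_real, Real.norm_eq_abs, abs_of_pos (by positivity)]
    rw [hnormc]
    have hA2 : ‖∫ t : ℝ, Ffun j ξ (((-a:ℝ):ℂ) + t*Complex.I) / (((-a:ℝ):ℂ) + t*Complex.I)‖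
        ≤ ξ ^ a * C := by
      refine (MeasureTheory.norm_integral_le_integral_norm _).trans ?_
      have hpt : ∀ t : ℝ, ‖Ffun j ξ (((-a:ℝ):ℂ) + t*Complex.I) / (((-a:ℝ):ℂ) + t*Complex.I)‖
          = ξ ^ a * (‖Gfun (((-a:ℝ):ℂ) + t*Complex.I)‖^j / ‖((-a:ℝ):ℂ) + t*Complex.I‖) := by
        intro t
        rw [Ffun, norm_div, norm_mul, norm_pow]
        have : ‖(ξ:ℂ) ^ (-(((-a:ℝ):ℂ) + t*Complex.I))‖ = ξ ^ a := by
          rw [Complex.norm_cpow_eq_rpow_re_of_pos hξ0]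
          congr 1
          simp
        rw [this]
        ring
      rw [MeasureTheory.integral_congr_ae (Filter.Eventually.of_forall hpt),
        MeasureTheory.integral_const_mul]
    calc 1/(2*Real.pi) * ‖∫ t : ℝ, Ffun j ξ (((-a:ℝ):ℂ) + t*Complex.I) / (((-a:ℝ):ℂ) + t*Complex.I)‖
        ≤ 1/(2*Real.pi) * (ξ ^ a * C) := by
          apply mul_le_mul_of_nonneg_left hA2 (by positivity)
      _ = K * ξ ^ a := by rw [hK]; ring
  refine ⟨⟨K, hbound⟩, ?_⟩
  have hsub : Filter.Tendsto (fun ξ : ℝ => omegaFun j ξ - 1) (nhdsWithin 0 (Set.Ioi 0)) (nhds 0) := by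
    have hrpow : Filter.Tendsto (fun ξ : ℝ => ξ ^ a) (nhdsWithin 0 (Set.Ioi 0)) (nhds 0) := by
      have hc : ContinuousAt (fun ξ : ℝ => ξ ^ a) 0 :=
        Real.continuousAt_rpow_const 0 a (Or.inr ha.le)
      have := hc.tendsto
      rw [Real.zero_rpow ha.ne'] at this
      exact this.mono_left nhdsWithin_le_nhds
    have hg : Filter.Tendsto (fun ξ : ℝ => K * ξ ^ a) (nhdsWithin 0 (Set.Ioi 0)) (nhds 0) := by
      have := hrpow.const_mul K
      simpa using this
    apply squeeze_zero_norm' ?_ hg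
    filter_upwards [Ioc_mem_nhdsGT_of_mem (Set.mem_Ico.mpr ⟨le_refl (0:ℝ), zero_lt_one⟩)]
      with ξ hξ
    exact hbound ξ hξ.1 hξ.2
  have := hsub.add (tendsto_const_nhds (x := (1:ℂ)))
  simpa using this
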